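/- arXiv:1107.4134 — 3 statements merged into one kernel-verified Lean document; each statement's English description precedes it below -/
import Mathlib

section
/- Let ω ∈ ℝ^d be badly approximable, satisfying ‖m·ω‖ ≥ K/|m|_∞^d for all nonzero m ∈ ℤ^d, and let R ⊆ B where B is a closed ball of radius r_max in the infinity norm. Then for any 2 ≤ i ≤ D(t) and all t > 0, consecutive distinct spacings satisfy Δ_i(t) − Δ_{i−1}(t) ≥ K/(4·r_max·t)^d. -/
open scoped BigOperators Pointwise

/-- Distance from a real number to the nearest integer. -/
noncomputable def distInt (θ : ℝ) : ℝ := |θ - round θ|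

/-- Euclidean norm of an integer vector. -/
noncomputable def eNorm {d : ℕ} (m : Fin d → ℤ) : ℝ := Real.sqrt (∑ i, ((m i : ℝ)) ^ 2)

/-- The fractional parts `{m · ω}` for lattice points `m` in the dilate `t • R`. -/
def fracPts {d : ℕ} (ω : Fin d → ℝ) (R : Set (Fin d → ℝ)) (t : ℝ) : Set ℝ :=
  {y | ∃ m : Fin d → ℤ, (fun i => (m i : ℝ)) ∈ t • R ∧ y = Int.fract (∑ i, (m i : ℝ) * ω i)}

/-- The set of distinct spacings: differences `y - x` between consecutive points
of `fracPts ω R t`. -/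
def spacings {d : ℕ} (ω : Fin d → ℝ) (R : Set (Fin d → ℝ)) (t : ℝ) : Set ℝ :=
  {g | ∃ x ∈ fracPts ω R t, ∃ y ∈ fracPts ω R t, x < y ∧
      (∀ z ∈ fracPts ω R t, ¬ (x < z ∧ z < y)) ∧ g = y - x}

/-- Sup norm of an integer vector. -/
noncomputable def supNorm {d : ℕ} (m : Fin d → ℤ) : ℝ := ‖(fun i => (m i : ℝ) : Fin d → ℝ)‖

theorem spacing_difference_lower_bound {d : ℕ} (hd : 1 ≤ d) (ω : Fin d → ℝ)
    (hindep : LinearIndependent ℚ (Fin.cons (1 : ℝ) ω))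
    (R : Set (Fin d → ℝ)) (hconv : Convex ℝ R) (hbdd : Bornology.IsBounded R)
    (rmax : ℝ) (hrmax : 0 < rmax) (b : Fin d → ℝ)
    (hRB : R ⊆ Metric.closedBall b rmax)
    (K : ℝ) (hK : 0 < K)
    (hBA : ∀ m : Fin d → ℤ, m ≠ 0 → K / supNorm m ^ d ≤ distInt (∑ i, (m i : ℝ) * ω i)) :
    ∀ t : ℝ, 0 < t → ∀ g ∈ spacings ω R t, ∀ g' ∈ spacings ω R t,
      g < g' → K / (4 * rmax * t) ^ d ≤ g' - g := by
  intro t ht g hg g' hg' hlt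
  obtain ⟨x, hx, y, hy, hxy, -, rfl⟩ := hg
  obtain ⟨x', hx', y', hy', hxy', -, rfl⟩ := hg'
  obtain ⟨m1, hm1, rfl⟩ := hx
  obtain ⟨m2, hm2, rfl⟩ := hy
  obtain ⟨m3, hm3, rfl⟩ := hx'
  obtain ⟨m4, hm4, rfl⟩ := hy'
  set S1 := ∑ i, (m1 i : ℝ) * ω i with hS1
  set S2 := ∑ i, (m2 i : ℝ) * ω i with hS2
  set S3 := ∑ i, (m3 i : ℝ) * ω i with hS3
  set S4 := ∑ i, (m4 i : ℝ) * ω i with hS4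
  set c : ℝ := (Int.fract S4 - Int.fract S3) - (Int.fract S2 - Int.fract S1) with hc
  have hc0 : 0 < c := by dsimp [c]; linarith
  have hc1 : c < 1 := by
    have h4 := Int.fract_lt_one S4
    have h3 := Int.fract_nonneg S3
    dsimp [c]; linarith
  set n : Fin d → ℤ := m4 - m3 - m2 + m1 with hn
  set N : ℤ := ⌊S4⌋ - ⌊S3⌋ - ⌊S2⌋ + ⌊S1⌋ with hN
  have hsum : (∑ i, (n i : ℝ) * ω i) = c + (N : ℝ) := by
    have h1 : (∑ i, (n i : ℝ) * ω i)
        = ∑ i, ((m4 i : ℝ) * ω i - (m3 i : ℝ) * ω i - (m2 i : ℝ) * ω i + (m1 i : ℝ) * ω i) := by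
      refine Finset.sum_congr rfl fun i _ => ?_
      simp only [hn, Pi.add_apply, Pi.sub_apply]
      push_cast
      ring
    rw [h1]
    simp only [Finset.sum_add_distrib, Finset.sum_sub_distrib, ← hS1, ← hS2, ← hS3, ← hS4]
    simp only [hc, hN, Int.fract]
    push_cast
    ring
  have hn0 : n ≠ 0 := by
    intro h0
    have hz : (∑ i, (n i : ℝ) * ω i) = 0 := by
      simp [h0]
    rw [hz] at hsum
    have hNc : (-N : ℝ) = c := by linarith
    have hNpos : 0 < -N := by
      have : (0 : ℝ) < (-N : ℤ) := by push_cast; linarith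
      exact_mod_cast this
    have h1N : (1 : ℤ) ≤ -N := hNpos
    have : (1 : ℝ) ≤ c := by
      rw [← hNc]; exact_mod_cast h1N
    linarith
  -- distInt bound
  have hdist : distInt (∑ i, (n i : ℝ) * ω i) ≤ c := by
    rw [hsum]
    unfold distInt
    rw [round_add_intCast]
    have he : c + (N : ℝ) - ((round c + N : ℤ) : ℝ) = c - round c := by push_cast; ring
    rw [he, abs_sub_round_eq_min, Int.fract_eq_self.mpr ⟨hc0.le, hc1⟩]
    exact min_le_left _ _
  -- sup norm bound
  obtain ⟨p1, hp1R, hp1⟩ := hm1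
  obtain ⟨p2, hp2R, hp2⟩ := hm2
  obtain ⟨p3, hp3R, hp3⟩ := hm3
  obtain ⟨p4, hp4R, hp4⟩ := hm4
  have hdistp : ∀ p q : Fin d → ℝ, p ∈ R → q ∈ R → ‖p - q‖ ≤ 2 * rmax := by
    intro p q hp hq
    have h1 := Metric.mem_closedBall.mp (hRB hp)
    have h2 := Metric.mem_closedBall.mp (hRB hq)
    calc ‖p - q‖ = dist p q := (dist_eq_norm p q).symm
      _ ≤ dist p b + dist b q := dist_triangle _ _ _
      _ ≤ rmax + rmax := by rw [dist_comm b q]; exact add_le_add h1 h2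
      _ = 2 * rmax := by ring
  have hnorm : supNorm n ≤ 4 * rmax * t := by
    have hcast : (fun i => (n i : ℝ)) = (t • p4 - t • p3) + (t • p1 - t • p2) := by
      funext i
      simp only [hn, Pi.add_apply, Pi.sub_apply, Pi.smul_apply, smul_eq_mul]
      have e1 := congrFun hp1 i
      have e2 := congrFun hp2 i
      have e3 := congrFun hp3 i
      have e4 := congrFun hp4 i
      simp only [Pi.smul_apply, smul_eq_mul] at e1 e2 e3 e4
      push_cast
      rw [← e1, ← e2, ← e3, ← e4]
      ring
    unfold supNorm
    rw [hcast]
    calc ‖(t • p4 - t • p3) + (t • p1 - t • p2)‖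
        ≤ ‖t • p4 - t • p3‖ + ‖t • p1 - t • p2‖ := norm_add_le _ _
      _ = ‖t • (p4 - p3)‖ + ‖t • (p1 - p2)‖ := by rw [smul_sub, smul_sub]
      _ = |t| * ‖p4 - p3‖ + |t| * ‖p1 - p2‖ := by rw [norm_smul, norm_smul, Real.norm_eq_abs]
      _ ≤ t * (2 * rmax) + t * (2 * rmax) := by
          rw [abs_of_pos ht]
          exact add_le_add (mul_le_mul_of_nonneg_left (hdistp _ _ hp4R hp3R) ht.le)
            (mul_le_mul_of_nonneg_left (hdistp _ _ hp1R hp2R) ht.le)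
      _ = 4 * rmax * t := by ring
  have hnpos : 0 < supNorm n := by
    unfold supNorm
    rw [norm_pos_iff]
    intro h
    apply hn0
    funext i
    have h0 : (n i : ℝ) = 0 := by simpa using congrFun h i
    exact_mod_cast h0
  have hfinal : K / (4 * rmax * t) ^ d ≤ K / supNorm n ^ d := by
    apply div_le_div_of_nonneg_left hK.le (pow_pos hnpos d)
    exact pow_le_pow_left₀ hnpos.le hnorm d
  have hend : K / (4 * rmax * t) ^ d ≤ c :=
    le_trans hfinal (le_trans (hBA n hn0) hdist)
  dsimp [c] at hend
  linarith
end

section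
/- Let Ω be a bounded convex region in ℝ² with nonempty interior. Then the map F sending a vector v ∈ ℝ² to the translated set Ω + v = {x + v : x ∈ Ω} is Lipschitz from (ℝ², |·|_∞) to subsets of ℝ² equipped with the distance d(S,T) = area(S △ T): there exists a constant C > 0 such that area((Ω + v₁) △ (Ω + v₂)) ≤ C·|v₁ − v₂|_∞ for all v₁, v₂ ∈ ℝ². -/
open MeasureTheory Pointwise

private lemma img_eq_preimage (w : Fin 2 → ℝ) (s : Set (Fin 2 → ℝ)) :
    (fun x => x + w) '' s = (fun x => x + (-w)) ⁻¹' s := by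
  ext x
  constructor
  · rintro ⟨y, hy, rfl⟩; simpa using hy
  · intro h; exact ⟨x + (-w), h, neg_add_cancel_right x w⟩

private lemma vol_translate (a : Fin 2 → ℝ) (s : Set (Fin 2 → ℝ)) :
    volume ((fun y => a + y) '' s) = volume s := by
  have : (fun y => a + y) '' s = (fun y => (-a) + y) ⁻¹' s := by
    ext x
    constructor
    · rintro ⟨y, hy, rfl⟩; simpa using hy
    · intro h; exact ⟨-a + x, h, add_neg_cancel_left a x⟩
  rw [this, measure_preimage_add]

private lemma core (Ω : Set (Fin 2 → ℝ)) (hconv : Convex ℝ Ω)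
    (x₀ : Fin 2 → ℝ) (r : ℝ) (hr : 0 < r)
    (hball : Metric.closedBall x₀ r ⊆ Ω) (hfin : volume Ω ≠ ⊤)
    (w : Fin 2 → ℝ) :
    volume (Ω \ (fun x => x + w) '' Ω) ≤
      ENNReal.ofReal (2 * (volume Ω).toReal / r * ‖w‖) := by
  set V := (volume Ω).toReal with hVdef
  have hV0 : 0 ≤ V := ENNReal.toReal_nonneg
  have hVeq : volume Ω = ENNReal.ofReal V := (ENNReal.ofReal_toReal hfin).symm
  by_cases hw : ‖w‖ ≤ r
  · by_cases hw0 : w = 0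
    · simp [hw0]
    · have hnw : 0 < ‖w‖ := norm_pos_iff.mpr hw0
      set t := ‖w‖ / r with htdef
      have ht0 : 0 < t := div_pos hnw hr
      have ht1 : t ≤ 1 := (div_le_one hr).mpr hw
      set Ωt := (fun x => x₀ + (1 - t) • (x - x₀)) '' Ω with hΩtdef
      have hx₀Ω : x₀ ∈ Ω := hball (Metric.mem_closedBall_self hr.le)
      have hsub1 : Ωt ⊆ Ω := by
        rintro _ ⟨x, hx, rfl⟩
        show x₀ + (1 - t) • (x - x₀) ∈ Ω
        have h1 : x₀ + (1 - t) • (x - x₀) = (1 - t) • x + t • x₀ := by module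
        rw [h1]
        exact hconv hx hx₀Ω (by linarith) ht0.le (by ring)
      have hsub2 : Ωt ⊆ (fun x => x + w) '' Ω := by
        rintro _ ⟨x, hx, rfl⟩
        refine ⟨x₀ + (1 - t) • (x - x₀) - w, ?_, sub_add_cancel _ _⟩
        have hmem : x₀ - t⁻¹ • w ∈ Ω := by
          apply hball
          simp only [Metric.mem_closedBall, dist_eq_norm]
          have h2 : x₀ - t⁻¹ • w - x₀ = -(t⁻¹ • w) := by abel
          rw [h2, norm_neg, norm_smul, norm_inv, Real.norm_eq_abs, abs_of_pos ht0, htdef]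
          field_simp; exact le_rfl
        have h3 : x₀ + (1 - t) • (x - x₀) - w
            = (1 - t) • x + t • (x₀ - t⁻¹ • w) := by
          match_scalars <;> field_simp <;> ring
        rw [h3]
        exact hconv hx hmem (by linarith) ht0.le (by ring)
      have hsub : Ω \ (fun x => x + w) '' Ω ⊆ Ω \ Ωt :=
        Set.diff_subset_diff_right hsub2
      have hΩt_eq : Ωt = (fun y => x₀ + y) '' ((1 - t) • ((fun x => (-x₀) + x) '' Ω)) := by
        rw [← Set.image_smul, Set.image_image, Set.image_image]
        apply Set.image_congr'
        intro x
        rw [neg_add_eq_sub]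
      have hfr : Module.finrank ℝ (Fin 2 → ℝ) = 2 := by simp
      have hvol_left : volume ((fun x => (-x₀) + x) '' Ω) = volume Ω := vol_translate _ _
      have hvolΩt : volume Ωt = ENNReal.ofReal ((1 - t) ^ 2) * volume Ω := by
        rw [hΩt_eq, vol_translate, Measure.addHaar_smul, hvol_left, hfr,
          abs_of_nonneg (sq_nonneg _)]
      have hΩt_conv : Convex ℝ Ωt := by
        rw [hΩt_eq]
        exact ((hconv.translate (-x₀)).smul (1 - t)).translate x₀
      have hmeas : NullMeasurableSet Ωt volume := hΩt_conv.nullMeasurableSet (μ := volume)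
      calc volume (Ω \ (fun x => x + w) '' Ω) ≤ volume (Ω \ Ωt) := measure_mono hsub
        _ = volume Ω - volume Ωt := by
            rw [measure_diff hsub1 hmeas]
            exact ne_top_of_le_ne_top hfin (measure_mono hsub1)
        _ = ENNReal.ofReal V - ENNReal.ofReal ((1 - t) ^ 2 * V) := by
            rw [hvolΩt, hVeq, ← ENNReal.ofReal_mul (sq_nonneg _)]
        _ ≤ ENNReal.ofReal (V - (1 - t) ^ 2 * V) := tsub_le_iff_right.mpr
            (by rw [← ENNReal.ofReal_add (by nlinarith [mul_nonneg (mul_nonneg hV0 ht0.le) (by linarith : (0:ℝ) ≤ 2 - t)]) (by positivity)]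
                exact ENNReal.ofReal_le_ofReal (by nlinarith))
        _ ≤ ENNReal.ofReal (2 * V / r * ‖w‖) := by
            apply ENNReal.ofReal_le_ofReal
            have h4 : 2 * V / r * ‖w‖ = (2 * t) * V := by
              rw [htdef]; field_simp
            rw [h4]
            nlinarith [sq_nonneg t, mul_nonneg (mul_nonneg ht0.le ht0.le) hV0]
  · push_neg at hw
    calc volume (Ω \ (fun x => x + w) '' Ω) ≤ volume Ω := measure_mono Set.diff_subset
      _ = ENNReal.ofReal V := hVeq
      _ ≤ ENNReal.ofReal (2 * V / r * ‖w‖) := by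
          apply ENNReal.ofReal_le_ofReal
          rw [div_mul_eq_mul_div, le_div_iff₀ hr]
          nlinarith

theorem translation_lipschitz_area (Ω : Set (Fin 2 → ℝ))
    (hconv : Convex ℝ Ω) (hbdd : Bornology.IsBounded Ω)
    (hint : (interior Ω).Nonempty) :
    ∃ C : ℝ, 0 < C ∧ ∀ v₁ v₂ : Fin 2 → ℝ,
      volume (symmDiff ((fun x => x + v₁) '' Ω) ((fun x => x + v₂) '' Ω)) ≤
        ENNReal.ofReal (C * ‖v₁ - v₂‖) := by
  obtain ⟨x₀, hx₀⟩ := hint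
  obtain ⟨r, hr, hballr⟩ := Metric.isOpen_iff.mp isOpen_interior x₀ hx₀
  have hball : Metric.closedBall x₀ (r / 2) ⊆ Ω :=
    (Metric.closedBall_subset_ball (by linarith)).trans (hballr.trans interior_subset)
  have hr2 : 0 < r / 2 := by linarith
  have hfin : volume Ω ≠ ⊤ := hbdd.measure_lt_top.ne
  have hVpos : 0 < (volume Ω).toReal := by
    refine ENNReal.toReal_pos ?_ hfin
    have : 0 < volume Ω :=
      lt_of_lt_of_le (Metric.measure_ball_pos volume x₀ hr)
        (measure_mono (hballr.trans interior_subset))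
    exact this.ne'
  set V := (volume Ω).toReal with hVdef
  refine ⟨4 * V / (r / 2), by positivity, fun v₁ v₂ => ?_⟩
  set w := v₂ - v₁ with hwdef
  -- translate everything by -v₁
  have e1 : (fun x => x + v₁) '' Ω = (fun x => x + (-v₁)) ⁻¹' Ω := img_eq_preimage _ _
  have e2 : (fun x => x + v₂) '' Ω
      = (fun x => x + (-v₁)) ⁻¹' ((fun x => x + w) '' Ω) := by
    rw [img_eq_preimage, img_eq_preimage]
    ext x
    have hx : x + -v₁ + -w = x + -v₂ := by rw [hwdef]; abel
    simp only [Set.mem_preimage, hx]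
  have hstep : volume (symmDiff ((fun x => x + v₁) '' Ω) ((fun x => x + v₂) '' Ω))
      = volume (symmDiff Ω ((fun x => x + w) '' Ω)) := by
    rw [e1, e2, ← Set.preimage_symmDiff, measure_preimage_add_right]
  -- reflection identity
  have key : ∀ u : Fin 2 → ℝ, volume ((fun x => x + u) '' Ω \ Ω)
      = volume (Ω \ (fun x => x + (-u)) '' Ω) := by
    intro u
    rw [← measure_preimage_add_right volume u ((fun x => x + u) '' Ω \ Ω)]
    congr 1
    ext x
    simp [img_eq_preimage, Set.mem_preimage, neg_neg, add_neg_cancel_right]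
  have hcore := core Ω hconv x₀ (r / 2) hr2 hball hfin
  have hbound : volume (symmDiff Ω ((fun x => x + w) '' Ω))
      ≤ ENNReal.ofReal (4 * V / (r / 2) * ‖w‖) := by
    rw [Set.symmDiff_def]
    calc volume (Ω \ (fun x => x + w) '' Ω ∪ (fun x => x + w) '' Ω \ Ω)
        ≤ volume (Ω \ (fun x => x + w) '' Ω) + volume ((fun x => x + w) '' Ω \ Ω) :=
          measure_union_le _ _
      _ ≤ ENNReal.ofReal (2 * V / (r / 2) * ‖w‖) + ENNReal.ofReal (2 * V / (r / 2) * ‖-w‖) := by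
          gcongr
          · exact hcore w
          · rw [key w]; exact hcore (-w)
      _ = ENNReal.ofReal (4 * V / (r / 2) * ‖w‖) := by
          rw [norm_neg, ← ENNReal.ofReal_add (by positivity) (by positivity)]
          congr 1
          ring
  rw [hstep]
  refine hbound.trans (ENNReal.ofReal_le_ofReal ?_)
  rw [hwdef, norm_sub_rev]
end

section
/- Let τ ∈ ℝ be Diophantine with exponent κ, meaning there is K₀ > 0 with |m + nτ| ≥ K₀/|(m,n)|^κ for all nonzero (m,n) ∈ ℤ². Then there exists a set Λ ⊆ [0,1] of full Lebesgue measure such that for every α ∈ Λ and every γ > max(3, κ), the pair (τ, α) is Diophantine with exponent γ: there exists K > 0 such that |m + nτ + pα| ≥ K/|(m,n,p)|^γ for all nonzero integer vectors (m,n,p) ∈ ℤ³, where |·| denotes the Euclidean norm. -/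
open MeasureTheory
open scoped ENNReal NNReal


noncomputable section FMDP
namespace FMDP

def nv (m n p : ℤ) : ℝ := Real.sqrt ((m:ℝ)^2 + (n:ℝ)^2 + (p:ℝ)^2)

lemma one_le_sq {k : ℤ} (hk : k ≠ 0) : (1:ℝ) ≤ (k:ℝ)^2 := by
  have h1 : (1:ℤ) ≤ |k| := Int.one_le_abs hk
  have h2 : (1:ℝ) ≤ |(k:ℝ)| := by
    rw [← Int.cast_abs]; exact_mod_cast h1
  nlinarith [sq_abs (k:ℝ)]

lemma one_le_nv {m n p : ℤ} (h : ¬(m = 0 ∧ n = 0 ∧ p = 0)) : 1 ≤ nv m n p := by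
  have h1 : (1:ℝ) ≤ (m:ℝ)^2 + (n:ℝ)^2 + (p:ℝ)^2 := by
    by_cases hm : m = 0
    · by_cases hn : n = 0
      · have hp : p ≠ 0 := by tauto
        nlinarith [one_le_sq hp, sq_nonneg (m:ℝ), sq_nonneg (n:ℝ)]
      · nlinarith [one_le_sq hn, sq_nonneg (m:ℝ), sq_nonneg (p:ℝ)]
    · nlinarith [one_le_sq hm, sq_nonneg (n:ℝ), sq_nonneg (p:ℝ)]
  calc (1:ℝ) = Real.sqrt 1 := Real.sqrt_one.symm
  _ ≤ nv m n p := Real.sqrt_le_sqrt h1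

lemma vol_abs_lt (p : ℤ) (hp : p ≠ 0) (c r : ℝ) :
    volume {α : ℝ | |c + (p:ℝ) * α| < r} ≤ ENNReal.ofReal (2 * (r / |(p:ℝ)|)) := by
  have hp0 : ((p:ℝ)) ≠ 0 := Int.cast_ne_zero.mpr hp
  have hp' : (0:ℝ) < |(p:ℝ)| := abs_pos.mpr hp0
  have key : ∀ α : ℝ, |(α + c/(p:ℝ)) * (p:ℝ)| = |c + (p:ℝ)*α| := by
    intro α
    rw [abs_eq_abs]; left; field_simp; ring
  have hset : {α : ℝ | |c + (p:ℝ) * α| < r} = Metric.ball (-(c/(p:ℝ))) (r/|(p:ℝ)|) := by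
    ext α
    simp only [Set.mem_setOf_eq, Metric.mem_ball, Real.dist_eq]
    rw [sub_neg_eq_add, lt_div_iff₀ hp', ← abs_mul, key]
  rw [hset, Real.volume_ball]

set_option maxHeartbeats 2000000 in
lemma step_pn (τ g ε : ℝ) (hg : 3 < g) (hε0 : 0 < ε) (hε1 : ε ≤ 1) (p n : ℤ) :
    ∑' m : ℤ, volume ({α : ℝ | p ≠ 0 ∧ |(m:ℝ) + (n:ℝ)*τ + (p:ℝ)*α| < ε / (nv m n p)^g}
        ∩ Set.Icc 0 1)
      ≤ ENNReal.ofReal (ε * ((2*(2* |τ|+5)*Real.sqrt 2^g) *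
          ((1/(1+|(n:ℝ)|)^((g-1)/2)) * (1/|(p:ℝ)|^((g-1)/2))))) := by
  by_cases hp : p = 0
  · subst hp
    have : ∀ m : ℤ, ({α : ℝ | (0:ℤ) ≠ 0 ∧ |(m:ℝ) + (n:ℝ)*τ + ((0:ℤ):ℝ)*α| < ε / (nv m n 0)^g}
        ∩ Set.Icc 0 1) = ∅ := by
      intro m; simp
    simp only [this, measure_empty, tsum_zero]
    exact zero_le
  · have hp0 : ((p:ℝ)) ≠ 0 := Int.cast_ne_zero.mpr hp
    have hp1 : (1:ℝ) ≤ |(p:ℝ)| := by rw [← Int.cast_abs]; exact_mod_cast Int.one_le_abs hp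
    have hpabs : (0:ℝ) < |(p:ℝ)| := lt_of_lt_of_le one_pos hp1
    set w : ℝ := |(n:ℝ)| + |(p:ℝ)| with hwdef
    have hw1 : (1:ℝ) ≤ w := by have := abs_nonneg (n:ℝ); simp only [hwdef]; linarith
    have hw0 : (0:ℝ) < w := lt_of_lt_of_le one_pos hw1
    have hg0 : (0:ℝ) ≤ g := by linarith
    set s : ℝ := (g-1)/2 with hsdef
    have hs0 : (0:ℝ) ≤ s := by simp only [hsdef]; linarith
    set R : ℝ := |(n:ℝ)| * |τ| + |(p:ℝ)| + 1 with hRdef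
    have hR1 : (1:ℝ) ≤ R := by
      have := mul_nonneg (abs_nonneg (n:ℝ)) (abs_nonneg τ)
      simp only [hRdef]; linarith
    set M : ℤ := ⌊R⌋ with hMdef
    have hM1 : (1:ℤ) ≤ M := by
      rw [hMdef, Int.le_floor]; exact_mod_cast hR1
    have hMR : (M:ℝ) ≤ R := Int.floor_le R
    set cval : ℝ := 2*ε*Real.sqrt 2^g/(w^g * |(p:ℝ)|) with hcval
    have hcval0 : (0:ℝ) ≤ cval := by positivity
    have hterm : ∀ m : ℤ,
        volume ({α : ℝ | p ≠ 0 ∧ |(m:ℝ) + (n:ℝ)*τ + (p:ℝ)*α| < ε / (nv m n p)^g}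
          ∩ Set.Icc 0 1)
        ≤ if |(m:ℝ)| ≤ R then ENNReal.ofReal cval else 0 := by
      intro m
      have hnv1 : 1 ≤ nv m n p := one_le_nv (by tauto)
      have hnv0 : (0:ℝ) < nv m n p := lt_of_lt_of_le one_pos hnv1
      have hnvg : (1:ℝ) ≤ (nv m n p)^g := Real.one_le_rpow hnv1 hg0
      by_cases hmR : |(m:ℝ)| ≤ R
      · rw [if_pos hmR]
        have hsub : ({α : ℝ | p ≠ 0 ∧ |(m:ℝ) + (n:ℝ)*τ + (p:ℝ)*α| < ε / (nv m n p)^g}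
            ∩ Set.Icc 0 1)
            ⊆ {α : ℝ | |((m:ℝ) + (n:ℝ)*τ) + (p:ℝ)*α| < ε / (nv m n p)^g} := by
          intro α hα
          have := hα.1.2
          simpa [add_assoc] using this
        refine le_trans (measure_mono hsub) (le_trans (vol_abs_lt p hp _ _) ?_)
        apply ENNReal.ofReal_le_ofReal
        have hwnv : w ≤ Real.sqrt 2 * nv m n p := by
          have h2 : w^2 ≤ 2 * ((m:ℝ)^2+(n:ℝ)^2+(p:ℝ)^2) := by
            simp only [hwdef]
            nlinarith [sq_nonneg (|(n:ℝ)| - |(p:ℝ)|), sq_abs (n:ℝ), sq_abs (p:ℝ),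
              sq_nonneg (m:ℝ)]
          have hw' : w = Real.sqrt (w^2) := (Real.sqrt_sq hw0.le).symm
          rw [hw']
          calc Real.sqrt (w^2) ≤ Real.sqrt (2*((m:ℝ)^2+(n:ℝ)^2+(p:ℝ)^2)) :=
                Real.sqrt_le_sqrt h2
          _ = Real.sqrt 2 * nv m n p := Real.sqrt_mul (by norm_num) _
        have hpow : w^g ≤ Real.sqrt 2^g * (nv m n p)^g := by
          rw [← Real.mul_rpow (Real.sqrt_nonneg 2) hnv0.le]
          exact Real.rpow_le_rpow hw0.le hwnv hg0
        have hA : 2 * (ε / (nv m n p)^g / |(p:ℝ)|) = 2*ε/((nv m n p)^g * |(p:ℝ)|) := by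
          ring
        rw [hA, hcval, div_le_div_iff₀ (by positivity) (by positivity)]
        nlinarith [mul_le_mul_of_nonneg_left hpow
          (show (0:ℝ) ≤ 2*ε* |(p:ℝ)| by positivity)]
      · rw [if_neg hmR]
        have hempty : ({α : ℝ | p ≠ 0 ∧ |(m:ℝ) + (n:ℝ)*τ + (p:ℝ)*α| < ε / (nv m n p)^g}
            ∩ Set.Icc 0 1) = ∅ := by
          rw [Set.eq_empty_iff_forall_notMem]
          rintro α ⟨⟨-, hlt⟩, hα0, hα1⟩
          have hlt1 : |(m:ℝ) + (n:ℝ)*τ + (p:ℝ)*α| < 1 := by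
            refine lt_of_lt_of_le hlt ?_
            rw [div_le_one (by positivity)]
            linarith
          have hαabs : |α| ≤ 1 := by rw [abs_of_nonneg hα0]; exact hα1
          have habs : |(m:ℝ)| ≤ R := by
            have t1 : |(m:ℝ)| ≤ |(m:ℝ) + (n:ℝ)*τ + (p:ℝ)*α| + |(n:ℝ)*τ + (p:ℝ)*α| := by
              have h := abs_add_le ((m:ℝ) + (n:ℝ)*τ + (p:ℝ)*α) (-((n:ℝ)*τ + (p:ℝ)*α))
              rw [abs_neg] at h
              have e2 : (m:ℝ) + (n:ℝ)*τ + (p:ℝ)*α + -((n:ℝ)*τ + (p:ℝ)*α) = (m:ℝ) := by ring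
              rwa [e2] at h
            have t2 : |(n:ℝ)*τ + (p:ℝ)*α| ≤ |(n:ℝ)| * |τ| + |(p:ℝ)| * |α| := by
              calc |(n:ℝ)*τ + (p:ℝ)*α| ≤ |(n:ℝ)*τ| + |(p:ℝ)*α| := abs_add_le _ _
              _ = |(n:ℝ)| * |τ| + |(p:ℝ)| * |α| := by rw [abs_mul, abs_mul]
            have t3 : |(p:ℝ)| * |α| ≤ |(p:ℝ)| := by
              nlinarith [abs_nonneg α]
            simp only [hRdef]
            linarith
          exact hmR habs
        rw [hempty]; simp
    calc ∑' m : ℤ, volume ({α : ℝ | p ≠ 0 ∧ |(m:ℝ) + (n:ℝ)*τ + (p:ℝ)*α| < ε / (nv m n p)^g}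
          ∩ Set.Icc 0 1)
        ≤ ∑' m : ℤ, (if |(m:ℝ)| ≤ R then ENNReal.ofReal cval else 0) :=
          ENNReal.tsum_le_tsum hterm
    _ = ∑ m ∈ Finset.Icc (-M) M, (if |(m:ℝ)| ≤ R then ENNReal.ofReal cval else 0) := by
        apply tsum_eq_sum
        intro m hm
        rw [if_neg]
        intro hmR
        apply hm
        rw [Finset.mem_Icc]
        constructor
        · rw [neg_le]
          rw [hMdef, Int.le_floor]
          push_cast
          exact le_trans (neg_le_abs (m:ℝ)) hmR
        · rw [hMdef, Int.le_floor]
          exact le_trans (le_abs_self (m:ℝ)) hmR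
    _ ≤ ∑ m ∈ Finset.Icc (-M) M, ENNReal.ofReal cval := by
        apply Finset.sum_le_sum
        intro m _
        split <;> simp
    _ = ((Finset.Icc (-M) M).card : ℝ≥0∞) * ENNReal.ofReal cval := by
        rw [Finset.sum_const, nsmul_eq_mul]
    _ ≤ ENNReal.ofReal ((2*R+1) * cval) := by
        have hcard : ((Finset.Icc (-M) M).card : ℝ) ≤ 2*R+1 := by
          rw [Int.card_Icc]
          have h1 : M + 1 - -M = 2*M+1 := by ring
          rw [h1]
          have h2 : (((2*M+1 : ℤ).toNat : ℕ) : ℝ) = ((2*M+1 : ℤ) : ℝ) := by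
            have := Int.toNat_of_nonneg (show (0:ℤ) ≤ 2*M+1 by linarith)
            exact_mod_cast congrArg (fun z : ℤ => (z : ℝ)) this
          rw [h2]
          push_cast
          linarith
        calc ((Finset.Icc (-M) M).card : ℝ≥0∞) * ENNReal.ofReal cval
            = ENNReal.ofReal ((Finset.Icc (-M) M).card) * ENNReal.ofReal cval := by
              rw [ENNReal.ofReal_natCast]
        _ = ENNReal.ofReal ((Finset.Icc (-M) M).card * cval) :=
              (ENNReal.ofReal_mul (by positivity)).symm
        _ ≤ ENNReal.ofReal ((2*R+1) * cval) :=
              ENNReal.ofReal_le_ofReal (mul_le_mul_of_nonneg_right hcard hcval0)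
    _ ≤ ENNReal.ofReal (ε * ((2*(2* |τ|+5)*Real.sqrt 2^g) *
          ((1/(1+|(n:ℝ)|)^s) * (1/|(p:ℝ)|^s)))) := by
        apply ENNReal.ofReal_le_ofReal
        have hRw : 2*R+1 ≤ (2* |τ|+5)*w := by
          simp only [hRdef, hwdef]
          nlinarith [abs_nonneg τ, abs_nonneg (n:ℝ), hp1]
        have hwg1ne : w^(g-1) ≠ 0 := by positivity
        have hgsplit : w^g = w * (w^(g-1)) := by
          rw [show g = 1 + (g-1) by ring, Real.rpow_add hw0, Real.rpow_one]
          ring_nf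
        have hww : (1+|(n:ℝ)|)^s * |(p:ℝ)|^s ≤ w^(g-1) := by
          have h1 : (1+|(n:ℝ)|) * |(p:ℝ)| ≤ w^2 := by
            simp only [hwdef]
            nlinarith [abs_nonneg (n:ℝ), hp1]
          calc (1+|(n:ℝ)|)^s * |(p:ℝ)|^s = ((1+|(n:ℝ)|) * |(p:ℝ)|)^s :=
                (Real.mul_rpow (by positivity) (abs_nonneg _)).symm
          _ ≤ (w^2)^s := Real.rpow_le_rpow (by positivity) h1 hs0
          _ = w^(g-1) := by
              rw [← Real.rpow_natCast w 2, ← Real.rpow_mul hw0.le]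
              norm_num
              congr 1
              simp only [hsdef]
              ring
        calc (2*R+1) * cval ≤ ((2* |τ|+5)*w) * cval :=
              mul_le_mul_of_nonneg_right hRw hcval0
        _ = (ε * (2*(2* |τ|+5)*Real.sqrt 2^g)) * (1/(w^(g-1) * |(p:ℝ)|)) := by
              rw [hcval, hgsplit]
              field_simp
        _ ≤ (ε * (2*(2* |τ|+5)*Real.sqrt 2^g)) * (1/((1+|(n:ℝ)|)^s * |(p:ℝ)|^s)) := by
              apply mul_le_mul_of_nonneg_left _ (by positivity)
              apply one_div_le_one_div_of_le (by positivity)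
              nlinarith [hww, hp1, Real.rpow_nonneg hw0.le (g-1),
                mul_le_mul_of_nonneg_left hp1 (Real.rpow_nonneg hw0.le (g-1))]
        _ = ε * ((2*(2* |τ|+5)*Real.sqrt 2^g) * ((1/(1+|(n:ℝ)|)^s) * (1/|(p:ℝ)|^s))) := by
              ring

lemma key (τ : ℝ) {g : ℝ} (hg : 3 < g) :
    ∃ c : ℝ, 0 ≤ c ∧ ∀ ε : ℝ, 0 < ε → ε ≤ 1 →
      volume {α : ℝ | α ∈ Set.Icc (0:ℝ) 1 ∧ ∃ m n p : ℤ, p ≠ 0 ∧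
        |(m:ℝ) + (n:ℝ)*τ + (p:ℝ)*α| < ε / (nv m n p)^g} ≤ ENNReal.ofReal (ε * c) := by
  set s : ℝ := (g-1)/2 with hsdef
  have hs1 : 1 < s := by simp only [hsdef]; linarith
  have hs0 : (0:ℝ) < s := by linarith
  have hA : Summable (fun n : ℤ => 1/(1+|(n:ℝ)|)^s) := by
    have hnat : Summable (fun k : ℕ => 1/(1+(k:ℝ))^s) := by
      have h0 : Summable (fun k : ℕ => 1/|(k:ℝ)+1|^s) :=
        (Real.summable_one_div_nat_add_rpow 1 s).mpr hs1
      refine h0.congr fun k => ?_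
      rw [abs_of_nonneg (by positivity)]
      ring_nf
    apply Summable.of_nat_of_neg
    · refine hnat.congr fun k => ?_
      norm_num
    · refine hnat.congr fun k => ?_
      push_cast
      rw [abs_neg, abs_of_nonneg (by positivity : (0:ℝ) ≤ (k:ℝ))]
  have hB : Summable (fun p : ℤ => 1/|(p:ℝ)|^s) := by
    have hnat : Summable (fun k : ℕ => 1/(k:ℝ)^s) := Real.summable_one_div_nat_rpow.mpr hs1
    apply Summable.of_nat_of_neg
    · refine hnat.congr fun k => ?_
      norm_num
    · refine hnat.congr fun k => ?_
      push_cast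
      rw [abs_neg, abs_of_nonneg (by positivity : (0:ℝ) ≤ (k:ℝ))]
  set A := ∑' n : ℤ, 1/(1+|(n:ℝ)|)^s with hAdef
  set B := ∑' p : ℤ, 1/|(p:ℝ)|^s with hBdef
  have hA0 : 0 ≤ A := tsum_nonneg (fun n => by positivity)
  have hB0 : 0 ≤ B := tsum_nonneg (fun p => by positivity)
  set c₄ : ℝ := 2*(2* |τ| +5)*Real.sqrt 2^g with hc4
  have hc40 : 0 ≤ c₄ := by positivity
  refine ⟨c₄ * B * A, by positivity, ?_⟩
  intro ε hε0 hε1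
  set S : ℤ × ℤ × ℤ → Set ℝ := fun x =>
    {α : ℝ | x.1 ≠ 0 ∧ |(x.2.2:ℝ) + (x.2.1:ℝ)*τ + (x.1:ℝ)*α| < ε / (nv x.2.2 x.2.1 x.1)^g}
      ∩ Set.Icc 0 1 with hS
  have hsub : {α : ℝ | α ∈ Set.Icc (0:ℝ) 1 ∧ ∃ m n p : ℤ, p ≠ 0 ∧
      |(m:ℝ) + (n:ℝ)*τ + (p:ℝ)*α| < ε / (nv m n p)^g} ⊆ ⋃ x : ℤ × ℤ × ℤ, S x := by
    rintro α ⟨hIcc, m, n, p, hp, hlt⟩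
    exact Set.mem_iUnion.mpr ⟨(p, n, m), ⟨hp, hlt⟩, hIcc⟩
  calc volume {α : ℝ | α ∈ Set.Icc (0:ℝ) 1 ∧ ∃ m n p : ℤ, p ≠ 0 ∧
        |(m:ℝ) + (n:ℝ)*τ + (p:ℝ)*α| < ε / (nv m n p)^g}
      ≤ ∑' x : ℤ × ℤ × ℤ, volume (S x) :=
        (measure_mono hsub).trans (measure_iUnion_le _)
  _ = ∑' p : ℤ, ∑' n : ℤ, ∑' m : ℤ, volume (S (p, n, m)) := by
        rw [ENNReal.tsum_prod']
        exact tsum_congr fun p => ENNReal.tsum_prod'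
  _ ≤ ∑' p : ℤ, ∑' n : ℤ, ENNReal.ofReal (ε * (c₄ * ((1/(1+|(n:ℝ)|)^s) * (1/|(p:ℝ)|^s)))) := by
        refine ENNReal.tsum_le_tsum fun p => ENNReal.tsum_le_tsum fun n => ?_
        exact step_pn τ g ε hg hε0 hε1 p n
  _ = ∑' p : ℤ, ∑' n : ℤ, (ENNReal.ofReal ((ε * c₄) * (1/|(p:ℝ)|^s)) *
        ENNReal.ofReal (1/(1+|(n:ℝ)|)^s)) := by
        refine tsum_congr fun p => tsum_congr fun n => ?_
        rw [← ENNReal.ofReal_mul (by positivity)]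
        congr 1
        ring
  _ = ∑' p : ℤ, (ENNReal.ofReal ((ε * c₄) * (1/|(p:ℝ)|^s)) * ENNReal.ofReal A) := by
        refine tsum_congr fun p => ?_
        rw [ENNReal.tsum_mul_left]
        congr 1
        rw [hAdef, ENNReal.ofReal_tsum_of_nonneg (fun n => by positivity) hA]
  _ = (∑' p : ℤ, ENNReal.ofReal ((ε * c₄) * (1/|(p:ℝ)|^s))) * ENNReal.ofReal A :=
        ENNReal.tsum_mul_right
  _ = ENNReal.ofReal ((ε * c₄) * B) * ENNReal.ofReal A := by
        congr 1
        rw [← ENNReal.ofReal_tsum_of_nonneg (fun p => by positivity) (hB.mul_left (ε * c₄))]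
        congr 1
        rw [hBdef, tsum_mul_left]
  _ = ENNReal.ofReal (ε * (c₄ * B * A)) := by
        rw [← ENNReal.ofReal_mul (by positivity)]
        congr 1
        ring

end FMDP

theorem full_measure_diophantine_pairs (τ κ K₀ : ℝ) (hK₀ : 0 < K₀)
    (hτ : ∀ m n : ℤ, ¬(m = 0 ∧ n = 0) →
      K₀ / Real.sqrt ((m : ℝ) ^ 2 + (n : ℝ) ^ 2) ^ κ ≤ |(m : ℝ) + (n : ℝ) * τ|) :
    ∃ Λ : Set ℝ, Λ ⊆ Set.Icc 0 1 ∧ volume (Set.Icc (0 : ℝ) 1 \ Λ) = 0 ∧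
      ∀ α ∈ Λ, ∀ γ : ℝ, max 3 κ < γ →
        ∃ K : ℝ, 0 < K ∧ ∀ m n p : ℤ, ¬(m = 0 ∧ n = 0 ∧ p = 0) →
          K / Real.sqrt ((m : ℝ) ^ 2 + (n : ℝ) ^ 2 + (p : ℝ) ^ 2) ^ γ ≤
            |(m : ℝ) + (n : ℝ) * τ + (p : ℝ) * α| := by
  classical
  set b : ℝ := max 3 κ with hb
  have hb3 : (3:ℝ) ≤ b := le_max_left _ _
  have hbκ : κ ≤ b := le_max_right _ _
  set gg : ℕ → ℝ := fun i => b + 1/((i:ℝ)+1) with hgg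
  have hggb : ∀ i : ℕ, 3 < gg i := by
    intro i
    have h1 : (0:ℝ) < 1/((i:ℝ)+1) := by positivity
    simp only [hgg]
    linarith
  set Bad : ℕ → ℕ → Set ℝ := fun i j =>
    {α : ℝ | α ∈ Set.Icc (0:ℝ) 1 ∧ ∃ m n p : ℤ, p ≠ 0 ∧
      |(m:ℝ) + (n:ℝ)*τ + (p:ℝ)*α| < (1/((j:ℝ)+1)) / (FMDP.nv m n p)^(gg i)} with hBad
  set N : Set ℝ := ⋃ i : ℕ, ⋂ j : ℕ, Bad i j with hN
  have hNnull : volume N = 0 := by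
    rw [hN]
    apply measure_iUnion_null
    intro i
    obtain ⟨c, hc0, hc⟩ := FMDP.key τ (hggb i)
    have hbound : ∀ j : ℕ, volume (⋂ j', Bad i j') ≤ ENNReal.ofReal ((1/((j:ℝ)+1)) * c) := by
      intro j
      refine (measure_mono (Set.iInter_subset _ j)).trans ?_
      have hε1 : (1:ℝ)/((j:ℝ)+1) ≤ 1 := by
        rw [div_le_one (by positivity)]
        have : (0:ℝ) ≤ (j:ℝ) := Nat.cast_nonneg j
        linarith
      exact hc (1/((j:ℝ)+1)) (by positivity) hε1
    have htend : Filter.Tendsto (fun j : ℕ => ENNReal.ofReal ((1/((j:ℝ)+1)) * c))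
        Filter.atTop (nhds 0) := by
      have h1 : Filter.Tendsto (fun j : ℕ => (1/((j:ℝ)+1)) * c) Filter.atTop (nhds 0) := by
        simpa using tendsto_one_div_add_atTop_nhds_zero_nat.mul_const c
      have h2 := ENNReal.tendsto_ofReal h1
      simpa using h2
    exact le_antisymm (ge_of_tendsto htend (Filter.Eventually.of_forall hbound)) (zero_le)
  refine ⟨Set.Icc 0 1 \ N, Set.diff_subset, ?_, ?_⟩
  · refine measure_mono_null ?_ hNnull
    intro x hx
    obtain ⟨hx1, hx2⟩ := hx
    by_contra hxN
    exact hx2 ⟨hx1, hxN⟩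
  · intro α hα γ hγ
    obtain ⟨hαIcc, hαN⟩ := hα
    obtain ⟨i, hi⟩ := exists_nat_one_div_lt (show (0:ℝ) < γ - b by linarith)
    have hgiγ : gg i ≤ γ := by
      simp only [hgg]
      linarith
    have hαN' : ∃ j, α ∉ Bad i j := by
      by_contra h
      push_neg at h
      exact hαN (Set.mem_iUnion.mpr ⟨i, Set.mem_iInter.mpr h⟩)
    obtain ⟨j, hj⟩ := hαN'
    have hgood : ∀ m n p : ℤ, p ≠ 0 →
        (1/((j:ℝ)+1)) / (FMDP.nv m n p)^(gg i) ≤ |(m:ℝ) + (n:ℝ)*τ + (p:ℝ)*α| := by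
      intro m n p hp
      by_contra hlt
      push_neg at hlt
      exact hj ⟨hαIcc, m, n, p, hp, hlt⟩
    have hKpos : (0:ℝ) < min (1/((j:ℝ)+1)) K₀ := lt_min (by positivity) hK₀
    refine ⟨min (1/((j:ℝ)+1)) K₀, hKpos, ?_⟩
    intro m n p hmnp
    have hnv1 : 1 ≤ FMDP.nv m n p := FMDP.one_le_nv hmnp
    have hnv0 : (0:ℝ) < FMDP.nv m n p := lt_of_lt_of_le one_pos hnv1
    by_cases hp : p = 0
    · subst hp
      have hmn : ¬(m = 0 ∧ n = 0) := by tauto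
      have hτ' := hτ m n hmn
      have ht1 : 1 ≤ Real.sqrt ((m:ℝ)^2 + (n:ℝ)^2) := by
        have := hnv1
        unfold FMDP.nv at this
        simpa using this
      have ht0 : (0:ℝ) < Real.sqrt ((m:ℝ)^2 + (n:ℝ)^2) := lt_of_lt_of_le one_pos ht1
      have htκγ : Real.sqrt ((m:ℝ)^2 + (n:ℝ)^2)^κ ≤ Real.sqrt ((m:ℝ)^2 + (n:ℝ)^2)^γ :=
        Real.rpow_le_rpow_of_exponent_le ht1 (by linarith)
      have hstep : min (1/((j:ℝ)+1)) K₀ / Real.sqrt ((m:ℝ)^2 + (n:ℝ)^2)^γ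
          ≤ K₀ / Real.sqrt ((m:ℝ)^2 + (n:ℝ)^2)^κ :=
        div_le_div₀ hK₀.le (min_le_right _ _) (Real.rpow_pos_of_pos ht0 κ) htκγ
      have := hstep.trans hτ'
      simpa using this
    · have hg := hgood m n p hp
      have hnvγ : (FMDP.nv m n p)^(gg i) ≤ (FMDP.nv m n p)^γ :=
        Real.rpow_le_rpow_of_exponent_le hnv1 hgiγ
      have hstep : min (1/((j:ℝ)+1)) K₀ / (FMDP.nv m n p)^γ
          ≤ (1/((j:ℝ)+1)) / (FMDP.nv m n p)^(gg i) :=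
        div_le_div₀ (by positivity) (min_le_left _ _) (Real.rpow_pos_of_pos hnv0 (gg i)) hnvγ
      exact hstep.trans hg
end FMDP
end
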